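/- Let p be an odd prime, b ∈ ℚ_p with |b|_p > 1, and φ(x,y) = (y, x + y² + b). If (x,y) ∈ ℚ_p² is a periodic point of φ, then v_p(x) = v_p(y) = (1/2)·v_p(b); in particular v_p(b) is even. -/

import Mathlib

private noncomputable def henonSeq {p : ℕ} [Fact p.Prime] (b x y : ℚ_[p]) : ℕ → ℚ_[p]
  | 0 => x
  | 1 => y
  | (n+2) => henonSeq b x y n + (henonSeq b x y (n+1)) ^ 2 + b

private lemma val_of_sq {p : ℕ} [Fact p.Prime] {q b : ℚ_[p]} (hb : 1 < ‖b‖)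
    (h : ‖q‖ ^ 2 = ‖b‖) : 2 * q.valuation = b.valuation := by
  have hb0 : b ≠ 0 := by
    rintro rfl; rw [norm_zero] at hb; norm_num at hb
  have hq0 : q ≠ 0 := by
    rintro rfl; rw [norm_zero] at h; norm_num at h; rw [← h] at hb; norm_num at hb
  have hp1 : (1 : ℝ) < p := by exact_mod_cast (Fact.out : p.Prime).one_lt
  have hp0 : (0 : ℝ) < p := by linarith
  rw [Padic.norm_eq_zpow_neg_valuation hq0, Padic.norm_eq_zpow_neg_valuation hb0] at h
  have h2 : ((p : ℝ) ^ (-q.valuation)) ^ 2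
      = (p : ℝ) ^ (-q.valuation + -q.valuation) := by
    rw [zpow_add₀ (ne_of_gt hp0)]; ring
  rw [h2] at h
  have := zpow_right_injective₀ hp0 (ne_of_gt hp1) h
  omega

/-- for an odd prime `p`, `b ∈ ℚ_p` with `|b|_p > 1`, every periodic
point `(x,y)` of `φ(x,y) = (y, x+y²+b)` satisfies
`v_p(x) = v_p(y) = v_p(b)/2`; in particular `v_p(b)` is even. -/
theorem stmt5 (p : ℕ) [Fact p.Prime] (hp : Odd p) (b : ℚ_[p]) (hb : 1 < ‖b‖)
    (φ : ℚ_[p] × ℚ_[p] → ℚ_[p] × ℚ_[p])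
    (hφ : ∀ P, φ P = (P.2, P.1 + P.2 ^ 2 + b))
    (x y : ℚ_[p]) (N : ℕ) (hN : 1 ≤ N) (hper : φ^[N] (x, y) = (x, y)) :
    2 * x.valuation = b.valuation ∧ 2 * y.valuation = b.valuation ∧
      Even b.valuation := by
  set z : ℕ → ℚ_[p] := henonSeq b x y with hz
  have hrec : ∀ n, z (n + 2) = z n + (z (n + 1)) ^ 2 + b := by
    intro n; rw [hz]; rfl
  have hiter : ∀ n, φ^[n] (x, y) = (z n, z (n + 1)) := by
    intro n
    induction n with
    | zero => rfl
    | succ n ih =>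
      rw [Function.iterate_succ_apply', ih, hφ]
      exact Prod.ext rfl (hrec n).symm
  have hzN : z N = x ∧ z (N + 1) = y := by
    have := (hiter N).symm.trans hper
    exact ⟨congrArg Prod.fst this, congrArg Prod.snd this⟩
  -- periodicity of the sequence
  have hper2 : ∀ n, z (n + N) = z n ∧ z (n + 1 + N) = z (n + 1) := by
    intro n
    induction n with
    | zero =>
      refine ⟨by simpa [hz, henonSeq] using hzN.1, ?_⟩
      rw [Nat.zero_add, Nat.add_comm 1 N]
      simpa [hz, henonSeq] using hzN.2
    | succ n ih =>
      refine ⟨ih.2, ?_⟩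
      have e1 : n + 1 + 1 + N = (n + N) + 2 := by omega
      have e2 : n + 1 + N = (n + N) + 1 := by omega
      rw [e1, hrec (n + N), ← e2, ih.1, ih.2, ← hrec n]
  have hperk : ∀ m k, z (m + k * N) = z m := by
    intro m k
    induction k with
    | zero => simp
    | succ k ih =>
      have : m + (k + 1) * N = (m + k * N) + N := by ring
      rw [this, (hper2 (m + k * N)).1, ih]
  -- maximum of norms over the orbit
  obtain ⟨n₀, hn₀mem, hn₀max⟩ := Finset.exists_max_image (Finset.range N)
    (fun n => ‖z n‖) ⟨0, Finset.mem_range.mpr hN⟩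
  set r : ℝ := ‖z n₀‖ with hr
  have hbound : ∀ m, ‖z m‖ ≤ r := by
    intro m
    have hm : z m = z (m % N) := by
      conv_lhs => rw [show m = m % N + (m / N) * N from (Nat.mod_add_div' m N).symm]
      exact hperk _ _
    rw [hm]
    exact hn₀max _ (Finset.mem_range.mpr (Nat.mod_lt _ (by omega)))
  have hr0 : 0 ≤ r := norm_nonneg _
  -- Claim 1 : r ^ 2 ≤ ‖b‖
  have claim1 : r ^ 2 ≤ ‖b‖ := by
    by_contra hlt
    push_neg at hlt
    have hr1 : 1 < r := by nlinarith
    have hrr : r < r ^ 2 := by nlinarith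
    set k : ℕ := n₀ + N - 1 with hk
    have hk1 : k + 1 = n₀ + N := by omega
    have hzk1 : ‖z (k + 1)‖ = r := by
      rw [hk1, show n₀ + N = n₀ + 1 * N by ring, hperk]
    have hsum : z (k + 2) = (z k + b) + (z (k + 1)) ^ 2 := by rw [hrec k]; ring
    have hsmall : ‖z k + b‖ < r ^ 2 :=
      lt_of_le_of_lt (Padic.nonarchimedean _ _)
        (max_lt (lt_of_le_of_lt (hbound k) hrr) hlt)
    have hbig : ‖(z (k + 1)) ^ 2‖ = r ^ 2 := by rw [norm_pow, hzk1]
    have : ‖z (k + 2)‖ = r ^ 2 := by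
      rw [hsum, Padic.add_eq_max_of_ne (by rw [hbig]; exact ne_of_lt hsmall),
        hbig, max_eq_right (le_of_lt hsmall)]
    have h2 := hbound (k + 2)
    rw [this] at h2
    linarith
  -- Claim 2 : every orbit element has ‖z m‖ ^ 2 = ‖b‖
  have hrb : r < ‖b‖ := by nlinarith
  have claim2 : ∀ m, ‖z m‖ ^ 2 = ‖b‖ := by
    intro m
    have hle : ‖z m‖ ^ 2 ≤ ‖b‖ :=
      le_trans (by nlinarith [hbound m, norm_nonneg (z m)]) claim1
    rcases lt_or_eq_of_le hle with hlt | heq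
    · exfalso
      set k : ℕ := m + N - 1 with hk
      have hk1 : k + 1 = m + N := by omega
      have hzk1 : ‖z (k + 1)‖ = ‖z m‖ := by
        rw [hk1, show m + N = m + 1 * N by ring, hperk]
      have hsum : z (k + 2) = (z k + (z (k + 1)) ^ 2) + b := by rw [hrec k]
      have hsmall : ‖z k + (z (k + 1)) ^ 2‖ < ‖b‖ :=
        lt_of_le_of_lt (Padic.nonarchimedean _ _)
          (max_lt (lt_of_le_of_lt (hbound k) hrb) (by rw [norm_pow, hzk1]; exact hlt))
      have : ‖z (k + 2)‖ = ‖b‖ := by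
        rw [hsum, Padic.add_eq_max_of_ne (ne_of_lt hsmall),
          max_eq_right (le_of_lt hsmall)]
      have h2 := hbound (k + 2)
      rw [this] at h2
      linarith
    · exact heq
  have hx2 : ‖x‖ ^ 2 = ‖b‖ := claim2 0
  have hy2 : ‖y‖ ^ 2 = ‖b‖ := claim2 1
  have hvx := val_of_sq hb hx2
  have hvy := val_of_sq hb hy2
  exact ⟨hvx, hvy, ⟨x.valuation, by omega⟩⟩
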